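/- Let H be a real Hilbert space, R a bounded subset of H, and d_R(x,y) = sup_{r∈R}|⟨r,x−y⟩|. Then the closed unit ball B(H) equipped with the pseudometric d_R is a complete pseudometric space: every d_R-Cauchy sequence in B(H) d_R-converges to an element of B(H). -/

import Mathlib

open scoped RealInnerProductSpace

noncomputable def dR {H : Type*} [NormedAddCommGroup H] [InnerProductSpace ℝ H]
    (R : Set H) (x y : H) : ℝ :=
  ⨆ r : R, |⟪(r : H), x - y⟫|

theorem stmt9 {H : Type*} [NormedAddCommGroup H] [InnerProductSpace ℝ H] [CompleteSpace H]
    (R : Set H) (hR : Bornology.IsBounded R)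
    (x : ℕ → H) (hx : ∀ n, ‖x n‖ ≤ 1)
    (hcauchy : ∀ ε > (0 : ℝ), ∃ N, ∀ m ≥ N, ∀ n ≥ N, dR R (x m) (x n) < ε) :
    ∃ a : H, ‖a‖ ≤ 1 ∧
      Filter.Tendsto (fun n => dR R (x n) a) Filter.atTop (nhds 0) := by
  obtain ⟨C, hC⟩ := hR.exists_norm_le
  have hbdd : ∀ (z : H), BddAbove (Set.range fun r : R => |⟪(r : H), z⟫|) := by
    intro z
    refine ⟨C * ‖z‖, ?_⟩
    rintro _ ⟨r, rfl⟩
    calc |⟪(r : H), z⟫| ≤ ‖(r : H)‖ * ‖z‖ := abs_real_inner_le_norm _ _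
      _ ≤ C * ‖z‖ := mul_le_mul_of_nonneg_right (hC r r.2) (norm_nonneg z)
  have hkey : ∀ r ∈ R, ∀ y z : H, |⟪r, y - z⟫| ≤ dR R y z := by
    intro r hr y z
    exact le_ciSup (hbdd _) (⟨r, hr⟩ : R)
  set K := (Submodule.span ℝ R).topologicalClosure with hKdef
  have hRK : ∀ r ∈ R, r ∈ K :=
    fun r hr => (Submodule.span ℝ R).le_topologicalClosure (Submodule.subset_span hr)
  have hcs : ∀ v ∈ K, CauchySeq (fun n => (⟪v, x n⟫ : ℝ)) := by
    have hspan : ∀ v ∈ Submodule.span ℝ R, CauchySeq (fun n => (⟪v, x n⟫ : ℝ)) := by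
      intro v hv
      induction hv using Submodule.span_induction with
      | mem r hr =>
        rw [Metric.cauchySeq_iff]
        intro ε hε
        obtain ⟨N, hN⟩ := hcauchy ε hε
        refine ⟨N, fun m hm n hn => ?_⟩
        rw [Real.dist_eq]
        calc |(⟪r, x m⟫ : ℝ) - ⟪r, x n⟫| = |⟪r, x m - x n⟫| := by rw [inner_sub_right]
          _ ≤ dR R (x m) (x n) := hkey r hr _ _
          _ < ε := hN m hm n hn
      | zero => simpa using cauchySeq_const (0 : ℝ)
      | add u w hu hw ihu ihw => simp only [inner_add_left]; exact ihu.add ihw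
      | smul c u hu ih => simp only [real_inner_smul_left]; exact Real.uniformContinuous_const_mul.comp_cauchySeq ih
    intro v hv
    rw [Metric.cauchySeq_iff]
    intro ε hε
    obtain ⟨v', hv', hvv'⟩ : ∃ v' ∈ Submodule.span ℝ R, ‖v - v'‖ < ε / 8 := by
      have h : v ∈ closure ((Submodule.span ℝ R : Submodule ℝ H) : Set H) := hv
      rw [Metric.mem_closure_iff] at h
      obtain ⟨v', h1, h2⟩ := h (ε / 8) (by linarith)
      exact ⟨v', h1, by rwa [← dist_eq_norm]⟩
    obtain ⟨N, hN⟩ := Metric.cauchySeq_iff.mp (hspan v' hv') (ε / 2) (by linarith)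
    refine ⟨N, fun m hm n hn => ?_⟩
    have h1 := hN m hm n hn
    rw [Real.dist_eq] at h1 ⊢
    have e1 : (⟪v, x m⟫ : ℝ) - ⟪v, x n⟫ =
        (⟪v - v', x m - x n⟫ : ℝ) + ((⟪v', x m⟫ : ℝ) - ⟪v', x n⟫) := by
      simp only [inner_sub_left, inner_sub_right]; ring
    have h3 : ‖x m - x n‖ ≤ 2 := (norm_sub_le _ _).trans (by linarith [hx m, hx n])
    have h2 : |(⟪v - v', x m - x n⟫ : ℝ)| ≤ ε / 8 * 2 := by
      calc |(⟪v - v', x m - x n⟫ : ℝ)| ≤ ‖v - v'‖ * ‖x m - x n‖ := abs_real_inner_le_norm _ _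
        _ ≤ ε / 8 * 2 := mul_le_mul hvv'.le h3 (norm_nonneg _) (by linarith)
    calc |(⟪v, x m⟫ : ℝ) - ⟪v, x n⟫|
        ≤ |(⟪v - v', x m - x n⟫ : ℝ)| + |(⟪v', x m⟫ : ℝ) - ⟪v', x n⟫| := by
          rw [e1]; exact abs_add_le _ _
      _ < ε / 8 * 2 + ε / 2 := by linarith
      _ ≤ ε := by linarith
  have hcsK : ∀ v : K, CauchySeq (fun n => (⟪(v : H), x n⟫ : ℝ)) := fun v => hcs v v.2
  set g : K → ℝ := fun v => Filter.limUnder Filter.atTop (fun n => (⟪(v : H), x n⟫ : ℝ)) with hg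
  have hgt : ∀ v : K, Filter.Tendsto (fun n => (⟪(v : H), x n⟫ : ℝ)) Filter.atTop (nhds (g v)) :=
    fun v => (hcsK v).tendsto_limUnder
  have hadd : ∀ u v : K, g (u + v) = g u + g v := by
    intro u v
    refine tendsto_nhds_unique (hgt (u + v)) ?_
    simpa [inner_add_left] using (hgt u).add (hgt v)
  have hsmul : ∀ (c : ℝ) (v : K), g (c • v) = c * g v := by
    intro c v
    refine tendsto_nhds_unique (hgt (c • v)) ?_
    simpa [inner_smul_left] using (hgt v).const_mul c
  have hbound : ∀ v : K, |g v| ≤ 1 * ‖v‖ := by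
    intro v
    rw [one_mul]
    refine le_of_tendsto (hgt v).abs (Filter.Eventually.of_forall fun n => ?_)
    calc |(⟪(v : H), x n⟫ : ℝ)| ≤ ‖(v : H)‖ * ‖x n‖ := abs_real_inner_le_norm _ _
      _ ≤ ‖(v : H)‖ * 1 := mul_le_mul_of_nonneg_left (hx n) (norm_nonneg _)
      _ = ‖v‖ := mul_one _
  let f : K →L[ℝ] ℝ := LinearMap.mkContinuous
    { toFun := g, map_add' := hadd, map_smul' := hsmul } 1 hbound
  haveI : CompleteSpace K := (Submodule.isClosed_topologicalClosure _).completeSpace_coe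
  set aK : K := (InnerProductSpace.toDual ℝ K).symm f with haK
  have hfa : ∀ v : K, (⟪(aK : H), (v : H)⟫ : ℝ) = g v := by
    intro v
    have h1 : (⟪aK, v⟫ : ℝ) = f v := by
      rw [haK]
      rw [← InnerProductSpace.toDual_apply_apply]
      simp
    exact h1
  refine ⟨(aK : H), ?_, ?_⟩
  · have h1 : ‖(aK : H)‖ = ‖f‖ := by
      rw [haK]
      rw [show ‖((((InnerProductSpace.toDual ℝ K).symm f) : K) : H)‖ =
        ‖(InnerProductSpace.toDual ℝ K).symm f‖ from rfl]
      exact ((InnerProductSpace.toDual ℝ K).symm.norm_map f)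
    rw [h1]
    exact LinearMap.mkContinuous_norm_le _ zero_le_one hbound
  · rw [Metric.tendsto_atTop]
    intro ε hε
    obtain ⟨N, hN⟩ := hcauchy (ε / 2) (by linarith)
    refine ⟨N, fun m hm => ?_⟩
    rw [Real.dist_eq, sub_zero]
    have hnn : 0 ≤ dR R (x m) (aK : H) := Real.iSup_nonneg fun r => abs_nonneg _
    rw [abs_of_nonneg hnn]
    have hle : dR R (x m) (aK : H) ≤ ε / 2 := by
      refine Real.iSup_le ?_ (by linarith)
      rintro ⟨r, hr⟩
      have hrK : r ∈ K := hRK r hr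
      have hterm : (⟪r, x m - (aK : H)⟫ : ℝ) = (⟪r, x m⟫ : ℝ) - g ⟨r, hrK⟩ := by
        rw [inner_sub_right]
        congr 1
        rw [real_inner_comm]
        exact hfa ⟨r, hrK⟩
      show |(⟪r, x m - (aK : H)⟫ : ℝ)| ≤ ε / 2
      rw [hterm]
      have ht : Filter.Tendsto (fun n => |(⟪r, x m⟫ : ℝ) - ⟪r, x n⟫|) Filter.atTop
          (nhds |(⟪r, x m⟫ : ℝ) - g ⟨r, hrK⟩|) :=
        (tendsto_const_nhds.sub (hgt ⟨r, hrK⟩)).abs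
      refine le_of_tendsto ht ?_
      filter_upwards [Filter.eventually_ge_atTop N] with n hn
      calc |(⟪r, x m⟫ : ℝ) - ⟪r, x n⟫| = |⟪r, x m - x n⟫| := by rw [inner_sub_right]
        _ ≤ dR R (x m) (x n) := hkey r hr _ _
        _ ≤ ε / 2 := (hN m hm n hn).le
    linarith
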